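/- Allocative monotonicity of the factorized GEM-allocation rule (flat-vocabulary case of Proposition 1): let I be a finite nonempty type of sponsored items equipped with a linear tie-breaking order, base token logits z : I → ℝ, real slot logits z_AD and z_ORG, and λ ≥ 0. For a non-negative bid profile b : I → ℝ define the modulated token logits z̃_b(j) = z j + λ * log(1 + b j), the deterministic winner W(b) as the lexicographic argmax of (z̃_b(j), j), the modulated slot probability P_λ(AD | b) = exp(z_AD + λ * log(1 + max_j b j)) / (exp(z_AD + λ * log(1 + max_j b j)) + exp(z_ORG)), and the allocation x_i(b) = P_λ(AD | b) if W(b) = i and x_i(b) = 0 otherwise. Then for any unilateral bid increase from b to b' at item i (b' i ≥ b i and b' k = b k for k ≠ i, all bids non-negative), x_i(b') ≥ x_i(b). -/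

import Mathlib

/-- Modulated sponsored-slot probability given base logits `zAD`, `zORG`, modulation
strength `lam` and maximum bid `bmax`. -/
noncomputable def adProb (zAD zORG lam bmax : ℝ) : ℝ :=
  Real.exp (zAD + lam * Real.log (1 + bmax)) /
    (Real.exp (zAD + lam * Real.log (1 + bmax)) + Real.exp zORG)

/-- The deterministic winner under scores `s` with tie-breaking by the fixed linear
order on `ι`: the unique element maximal for the lexicographic comparison of
`(s j, j)`. -/
noncomputable def winner {ι : Type*} [Fintype ι] [Nonempty ι] [LinearOrder ι]
    (s : ι → ℝ) : ι :=
  (ofLex ((Finset.univ.image fun j => toLex ((s j, j) : ℝ × ι)).max'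
    (Finset.univ_nonempty.image _))).2

/-- The factorized GEM-allocation for item `i` under bid profile `b`: the modulated
slot probability if `i` is the (bid-modulated) deterministic winner, else `0`. -/
noncomputable def gemAlloc {I : Type*} [Fintype I] [Nonempty I] [LinearOrder I]
    (z : I → ℝ) (zAD zORG lam : ℝ) (i : I) (b : I → ℝ) : ℝ :=
  if winner (fun j => z j + lam * Real.log (1 + b j)) = i then
    adProb zAD zORG lam (Finset.univ.sup' Finset.univ_nonempty b)
  else 0

lemma adProb_nonneg (zAD zORG lam bmax : ℝ) : 0 ≤ adProb zAD zORG lam bmax := by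
  unfold adProb
  positivity

lemma adProb_mono (zAD zORG lam : ℝ) (hlam : 0 ≤ lam) {x y : ℝ}
    (hx : 0 ≤ x) (hxy : x ≤ y) :
    adProb zAD zORG lam x ≤ adProb zAD zORG lam y := by
  unfold adProb
  set e1 := Real.exp (zAD + lam * Real.log (1 + x)) with he1
  set e2 := Real.exp (zAD + lam * Real.log (1 + y)) with he2
  have h12 : e1 ≤ e2 := by
    apply Real.exp_le_exp.2
    have : Real.log (1 + x) ≤ Real.log (1 + y) :=
      Real.log_le_log (by linarith) (by linarith)
    nlinarith
  have h1 : 0 < e1 := Real.exp_pos _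
  have h2 : 0 < e2 := Real.exp_pos _
  have hc : 0 < Real.exp zORG := Real.exp_pos _
  rw [div_le_div_iff₀ (by positivity) (by positivity)]
  nlinarith

lemma winner_eq_iff {ι : Type*} [Fintype ι] [Nonempty ι] [LinearOrder ι]
    (s : ι → ℝ) (i : ι) :
    winner s = i ↔ ∀ j, toLex ((s j, j) : ℝ × ι) ≤ toLex ((s i, i) : ℝ × ι) := by
  classical
  set t := Finset.univ.image fun j => toLex ((s j, j) : ℝ × ι) with ht
  have hne : t.Nonempty := Finset.univ_nonempty.image _
  obtain ⟨w, -, hw⟩ := Finset.mem_image.1 (t.max'_mem hne)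
  have hwinner : winner s = w := by
    show (ofLex (t.max' hne)).2 = w
    rw [← hw]
    rfl
  constructor
  · intro h j
    have hmem : toLex ((s j, j) : ℝ × ι) ∈ t := Finset.mem_image_of_mem _ (Finset.mem_univ j)
    have h2 := Finset.le_max' t _ hmem
    have hwi : w = i := by rw [← hwinner, h]
    rw [← hw, hwi] at h2
    exact h2
  · intro h
    have hmem : toLex ((s i, i) : ℝ × ι) ∈ t := Finset.mem_image_of_mem _ (Finset.mem_univ i)
    have h1 : toLex ((s i, i) : ℝ × ι) ≤ t.max' hne := Finset.le_max' t _ hmem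
    have h2 : t.max' hne ≤ toLex ((s i, i) : ℝ × ι) := by rw [← hw]; exact h w
    have heq : toLex ((s w, w) : ℝ × ι) = toLex ((s i, i) : ℝ × ι) := by
      rw [hw]; exact le_antisymm h2 h1
    have : ((s w, w) : ℝ × ι) = (s i, i) := toLex.injective heq
    exact hwinner.trans (congrArg Prod.snd this)

/-- Allocative monotonicity of the factorized GEM-allocation rule (flat-vocabulary
case): a unilateral bid increase at item `i` weakly increases `i`'s allocation. -/
theorem gemAlloc_mono_unilateral_increase
    {I : Type*} [Fintype I] [Nonempty I] [LinearOrder I]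
    (z : I → ℝ) (zAD zORG lam : ℝ) (hlam : 0 ≤ lam)
    (b b' : I → ℝ) (hb : ∀ k, 0 ≤ b k) (hb' : ∀ k, 0 ≤ b' k)
    (i : I) (hinc : b i ≤ b' i) (hother : ∀ k, k ≠ i → b' k = b k) :
    gemAlloc z zAD zORG lam i b ≤ gemAlloc z zAD zORG lam i b' := by
  unfold gemAlloc
  by_cases hwin : winner (fun j => z j + lam * Real.log (1 + b j)) = i
  · -- i also wins under b'
    set s : I → ℝ := fun j => z j + lam * Real.log (1 + b j) with hs
    set s' : I → ℝ := fun j => z j + lam * Real.log (1 + b' j) with hs'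
    have hsle : s i ≤ s' i := by
      simp only [hs, hs']
      have : Real.log (1 + b i) ≤ Real.log (1 + b' i) :=
        Real.log_le_log (by have := hb i; linarith) (by linarith)
      nlinarith
    have hseq : ∀ j, j ≠ i → s' j = s j := by
      intro j hj; simp only [hs, hs', hother j hj]
    have hwin' : winner s' = i := by
      rw [winner_eq_iff]
      intro j
      by_cases hji : j = i
      · subst hji; exact le_refl _
      · have hj := (winner_eq_iff s i).1 hwin j
        rw [hseq j hji]
        rcases Prod.Lex.le_iff.1 hj with h | ⟨h1, h2⟩
        · exact Prod.Lex.le_iff.2 (Or.inl (lt_of_lt_of_le h hsle))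
        · have hle : s j ≤ s' i := le_trans (le_of_eq h1) hsle
          rcases lt_or_eq_of_le hle with h | h
          · exact Prod.Lex.le_iff.2 (Or.inl h)
          · exact Prod.Lex.le_iff.2 (Or.inr ⟨h, h2⟩)
    rw [if_pos hwin, if_pos hwin']
    apply adProb_mono _ _ _ hlam
    · obtain ⟨k⟩ := ‹Nonempty I›
      exact le_trans (hb k) (Finset.le_sup' b (Finset.mem_univ k))
    · apply Finset.sup'_mono_fun
      intro k _
      by_cases hk : k = i
      · subst hk; exact hinc
      · rw [hother k hk]
  · rw [if_neg hwin]
    by_cases hwin' : winner (fun j => z j + lam * Real.log (1 + b' j)) = i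
    · rw [if_pos hwin']; exact adProb_nonneg _ _ _ _
    · rw [if_neg hwin']
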